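/- arXiv:math-ph/0405062 — 4 statements merged into one kernel-verified Lean document; each statement's English description precedes it below -/
import Mathlib

section
/- In the fermionic Fock space over K, if T is a positive trace class operator with eigenvalues tₖ and orthonormal eigenbasis (bₖ), and a family of vectors Ψ (indexed by elements A of the unit ball of an algebra) satisfies |⟨b_{k₁} ∧ ... ∧ b_{kₙ}, Ψ_A⟩| ≤ 2ⁿ ∏ⱼ ||T b_{kⱼ}|| for all strictly increasing multi-indices, then each Ψ_A admits an expansion over the antisymmetric basis whose total coefficient sum is bounded by det(1 + 2T) ≤ exp(2||T||₁); hence the set {Ψ_A} is a nuclear subset of Fock space with nuclearity index at most det(1 + 2T). -/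
open scoped InnerProductSpace

theorem aux_hasProd_one_add (g : ℕ → ℝ)
    (hsum : Summable (fun S : Finset ℕ => ∏ k ∈ S, g k)) :
    HasProd (fun k => 1 + g k) (∑' S : Finset ℕ, ∏ k ∈ S, g k) := by
  have key : ∀ F : Finset ℕ, ∏ k ∈ F, (1 + g k) = ∑ S ∈ F.powerset, ∏ k ∈ S, g k := by
    intro F
    simp_rw [add_comm (1:ℝ)]
    rw [Finset.prod_add]
    simp
  have htend : Filter.Tendsto (fun F : Finset ℕ => F.powerset) Filter.atTop Filter.atTop := by
    rw [Filter.tendsto_atTop_atTop]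
    intro B
    refine ⟨B.sup id, fun F hF => fun S hS => ?_⟩
    exact Finset.mem_powerset.mpr ((Finset.le_sup (f := id) hS).trans hF)
  have := (hsum.hasSum.comp htend)
  unfold HasProd
  simpa only [Function.comp_def, key, SummationFilter.unconditional_filter] using this

/-- Nuclearity estimate on fermionic Fock space.  The fermionic Fock space over
`K` is presented through its orthonormal basis `b S` (indexed by finite subsets
`S = {k₁ < ⋯ < kₙ} ⊂ ℕ`, `b S = a*(b_{k₁})⋯a*(b_{kₙ})Ω`), built from the
eigenbasis of a positive trace class operator `T` with eigenvalues `t k`.  If a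
linear family `Ψ_A` (indexed by elements `A` of a Banach space `𝒜`, e.g. a
subalgebra of bounded operators) lies in the closed span of the basis and
satisfies `|⟨b S, Ψ A⟩| ≤ 2^|S| ‖A‖ ∏_{k ∈ S} ‖T bₖ‖`, then `Ψ` is nuclear with
nuclear norm at most `det(1 + 2T) = ∏ₖ (1 + 2tₖ) ≤ exp (2‖T‖₁)`. -/
theorem fermionic_fock_nuclearity
    {H 𝒜 : Type*} [NormedAddCommGroup H] [InnerProductSpace ℂ H] [CompleteSpace H]
    [NormedAddCommGroup 𝒜] [NormedSpace ℂ 𝒜]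
    (b : Finset ℕ → H) (hb : Orthonormal ℂ b)
    (t : ℕ → ℝ) (ht : ∀ k, 0 ≤ t k) (hsum : Summable t)
    (Ψ : 𝒜 →L[ℂ] H)
    (hspan : ∀ A, Ψ A = ∑' S : Finset ℕ, ⟪b S, Ψ A⟫_ℂ • b S)
    (hbound : ∀ A, ∀ S : Finset ℕ,
      ‖⟪b S, Ψ A⟫_ℂ‖ ≤ 2 ^ S.card * ‖A‖ * ∏ k ∈ S, t k) :
    ∃ (ρ : Finset ℕ → (𝒜 →L[ℂ] ℂ)) (v : Finset ℕ → H),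
      (∀ A, Ψ A = ∑' S : Finset ℕ, ρ S A • v S) ∧
      Summable (fun S : Finset ℕ => ‖ρ S‖ * ‖v S‖) ∧
      (∑' S : Finset ℕ, ‖ρ S‖ * ‖v S‖) ≤ ∏' k, (1 + 2 * t k) ∧
      (∏' k, (1 + 2 * t k)) ≤ Real.exp (2 * ∑' k, t k) := by
  classical
  set g : ℕ → ℝ := fun k => 2 * t k with hg
  have hgnn : ∀ k, 0 ≤ g k := fun k => mul_nonneg (by norm_num) (ht k)
  have hgsum : Summable g := hsum.mul_left 2
  have hgts : ∑' k, g k = 2 * ∑' k, t k := tsum_mul_left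
  have hprodg : ∀ S : Finset ℕ, ∏ k ∈ S, g k = 2 ^ S.card * ∏ k ∈ S, t k := by
    intro S
    simp [hg, Finset.prod_mul_distrib]
  have hprodnn : ∀ S : Finset ℕ, 0 ≤ ∏ k ∈ S, g k := fun S =>
    Finset.prod_nonneg fun k _ => hgnn k
  -- the partial sums of products are bounded by exp of the sum
  have hbdd : ∀ U : Finset (Finset ℕ),
      ∑ S ∈ U, ∏ k ∈ S, g k ≤ Real.exp (∑' k, g k) := by
    intro U
    set F : Finset ℕ := U.sup id with hF
    have hsub : U ⊆ F.powerset := fun S hS =>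
      Finset.mem_powerset.mpr (Finset.le_sup (f := id) hS)
    calc ∑ S ∈ U, ∏ k ∈ S, g k
        ≤ ∑ S ∈ F.powerset, ∏ k ∈ S, g k :=
          Finset.sum_le_sum_of_subset_of_nonneg hsub fun S _ _ => hprodnn S
      _ = ∏ k ∈ F, (1 + g k) := by
          simp_rw [add_comm (1:ℝ)]
          rw [Finset.prod_add]
          simp
      _ ≤ ∏ k ∈ F, Real.exp (g k) :=
          Finset.prod_le_prod (fun k _ => by have := hgnn k; linarith)
            (fun k _ => by
              have := Real.add_one_le_exp (g k); linarith)
      _ = Real.exp (∑ k ∈ F, g k) := (Real.exp_sum F g).symm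
      _ ≤ Real.exp (∑' k, g k) := by
          exact Real.exp_le_exp.mpr (Summable.sum_le_tsum F (fun k _ => hgnn k) hgsum)
  have hsumg : Summable (fun S : Finset ℕ => ∏ k ∈ S, g k) :=
    summable_of_sum_le hprodnn hbdd
  have hhp : HasProd (fun k => 1 + g k) (∑' S : Finset ℕ, ∏ k ∈ S, g k) :=
    aux_hasProd_one_add g hsumg
  have htpe : (∏' k, (1 + 2 * t k)) = ∑' S : Finset ℕ, ∏ k ∈ S, g k := hhp.tprod_eq
  -- the nuclear decomposition
  have hnb : ∀ S : Finset ℕ, ‖b S‖ = 1 := hb.1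
  have hρ : ∀ S : Finset ℕ, ‖(innerSL ℂ (b S)).comp Ψ‖ ≤ ∏ k ∈ S, g k := by
    intro S
    refine ContinuousLinearMap.opNorm_le_bound _ (hprodnn S) fun A => ?_
    have := hbound A S
    calc ‖((innerSL ℂ (b S)).comp Ψ) A‖ = ‖⟪b S, Ψ A⟫_ℂ‖ := by simp
      _ ≤ 2 ^ S.card * ‖A‖ * ∏ k ∈ S, t k := this
      _ = (∏ k ∈ S, g k) * ‖A‖ := by rw [hprodg S]; ring
  have hle : ∀ S : Finset ℕ, ‖(innerSL ℂ (b S)).comp Ψ‖ * ‖b S‖ ≤ ∏ k ∈ S, g k := by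
    intro S
    rw [hnb S, mul_one]
    exact hρ S
  have hsm : Summable (fun S : Finset ℕ => ‖(innerSL ℂ (b S)).comp Ψ‖ * ‖b S‖) :=
    Summable.of_nonneg_of_le (fun S => by positivity) hle hsumg
  refine ⟨fun S => ((innerSL ℂ (b S)).comp Ψ), b, ?_, ?_, ?_, ?_⟩
  · intro A
    simpa using hspan A
  · exact hsm
  · rw [htpe]
    exact Summable.tsum_le_tsum hle hsm hsumg
  · rw [htpe, hgts.symm]
    exact Summable.tsum_le_of_sum_le hsumg hbdd
end

section
/- Let L_φ, L_π be closed complex Γ-invariant subspaces of K with orthogonal projections E_φ, E_π, and L = (1+Γ)L_φ + (1-Γ)L_π. Then for any ψ ∈ K the vector ψ' := (½(1+Γ)(1-E_π) + ½(1-Γ)(1-E_φ))ψ lies in the symplectic complement L' of L. -/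
open scoped InnerProductSpace

/-- For closed complex `Γ`-invariant subspaces `L_φ, L_π` of `K` with orthogonal
projections `E_φ, E_π`, and `L = (1+Γ)L_φ + (1-Γ)L_π`, the vector
`ψ' = (½(1+Γ)(1-E_π) + ½(1-Γ)(1-E_φ))ψ` lies in the symplectic complement `L'`
of `L` for any `ψ ∈ K`. -/
theorem psi_prime_mem_symplectic_complement
    {K : Type*} [NormedAddCommGroup K] [InnerProductSpace ℂ K] [CompleteSpace K]
    (Γ : K → K)
    (hΓinv : ∀ ψ, Γ (Γ ψ) = ψ)
    (hΓadd : ∀ ψ₁ ψ₂, Γ (ψ₁ + ψ₂) = Γ ψ₁ + Γ ψ₂)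
    (hΓsmul : ∀ (c : ℂ) ψ, Γ (c • ψ) = (starRingEnd ℂ c) • Γ ψ)
    (hΓinner : ∀ ψ₁ ψ₂, ⟪Γ ψ₁, Γ ψ₂⟫_ℂ = ⟪ψ₂, ψ₁⟫_ℂ)
    (Lφ Lπ : Submodule ℂ K) [Submodule.HasOrthogonalProjection Lφ] [Submodule.HasOrthogonalProjection Lπ]
    (hLφΓ : ∀ x ∈ Lφ, Γ x ∈ Lφ) (hLπΓ : ∀ x ∈ Lπ, Γ x ∈ Lπ)
    (L : Set K)
    (hL : L = {x | ∃ f ∈ Lφ, ∃ g ∈ Lπ, x = (f + Γ f) + (g - Γ g)})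
    (ψ ψ' : K)
    (hψ' : ψ' = (2⁻¹ : ℝ) •
      (((ψ - (Submodule.orthogonalProjectionOnto Lπ ψ : K)) + Γ (ψ - (Submodule.orthogonalProjectionOnto Lπ ψ : K))) +
       ((ψ - (Submodule.orthogonalProjectionOnto Lφ ψ : K)) - Γ (ψ - (Submodule.orthogonalProjectionOnto Lφ ψ : K))))) :
    ∀ ξ ∈ L, ⟪ψ', ξ⟫_ℂ = ⟪ξ, ψ'⟫_ℂ := by
  subst hL
  rintro ξ ⟨f, hf, g, hg, rfl⟩
  set a : K := ψ - (Submodule.orthogonalProjectionOnto Lπ ψ : K) with ha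
  set b : K := ψ - (Submodule.orthogonalProjectionOnto Lφ ψ : K) with hb
  -- orthogonality facts
  have haπ : ∀ x ∈ Lπ, ⟪x, a⟫_ℂ = 0 := fun x hx =>
    (Submodule.mem_orthogonal _ _).1 (Submodule.sub_starProjection_mem_orthogonal (K := Lπ) ψ) x hx
  have hbφ : ∀ x ∈ Lφ, ⟪x, b⟫_ℂ = 0 := fun x hx =>
    (Submodule.mem_orthogonal _ _).1 (Submodule.sub_starProjection_mem_orthogonal (K := Lφ) ψ) x hx
  have haπ' : ∀ x ∈ Lπ, ⟪a, x⟫_ℂ = 0 := fun x hx => by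
    rw [← inner_conj_symm, haπ x hx, map_zero]
  have hbφ' : ∀ x ∈ Lφ, ⟪b, x⟫_ℂ = 0 := fun x hx => by
    rw [← inner_conj_symm, hbφ x hx, map_zero]
  -- Γ interacts with sub and neg
  have hΓneg : ∀ x : K, Γ (-x) = - Γ x := fun x => by
    have := hΓsmul (-1) x
    simpa using this
  have hΓsub : ∀ x y : K, Γ (x - y) = Γ x - Γ y := fun x y => by
    rw [sub_eq_add_neg, hΓadd, hΓneg, sub_eq_add_neg]
  have hsym : ∀ x y : K, ⟪x, y⟫_ℂ = ⟪Γ y, Γ x⟫_ℂ := fun x y => by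
    rw [hΓinner]
  have hsmulR : ∀ x : K, (2⁻¹ : ℝ) • x = (2⁻¹ : ℂ) • x := fun x => by
    norm_num [← Complex.coe_smul]
  -- atomic zeros
  have z1 : ⟪a, g⟫_ℂ = 0 := haπ' g hg
  have z2 : ⟪a, Γ g⟫_ℂ = 0 := haπ' (Γ g) (hLπΓ g hg)
  have z3 : ⟪Γ a, g⟫_ℂ = 0 := by
    rw [← hΓinv g, hΓinner]; exact haπ (Γ g) (hLπΓ g hg)
  have z4 : ⟪Γ a, Γ g⟫_ℂ = 0 := by rw [hΓinner]; exact haπ g hg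
  have z5 : ⟪b, f⟫_ℂ = 0 := hbφ' f hf
  have z6 : ⟪b, Γ f⟫_ℂ = 0 := hbφ' (Γ f) (hLφΓ f hf)
  have z7 : ⟪Γ b, f⟫_ℂ = 0 := by
    rw [← hΓinv f, hΓinner]; exact hbφ (Γ f) (hLφΓ f hf)
  have z8 : ⟪Γ b, Γ f⟫_ℂ = 0 := by rw [hΓinner]; exact hbφ f hf
  -- compute Γ ψ'
  have hΓψ' : Γ ψ' = (2⁻¹ : ℂ) • ((a + Γ a) - (b - Γ b)) := by
    rw [hψ', hsmulR, hΓsmul, hΓadd (a + Γ a) (b - Γ b), hΓadd a (Γ a), hΓsub b (Γ b),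
      hΓinv a, hΓinv b]
    have : (starRingEnd ℂ) (2⁻¹ : ℂ) = 2⁻¹ := by simp [Complex.ext_iff]
    rw [this]
    module
  rw [hsym ((f + Γ f) + (g - Γ g)) ψ', hΓadd (f + Γ f) (g - Γ g), hΓadd f (Γ f),
    hΓsub g (Γ g), hΓinv f, hΓinv g, hΓψ', hψ', hsmulR]
  simp only [inner_smul_left, inner_add_left, inner_add_right, inner_sub_left,
    inner_sub_right, z1, z2, z3, z4, z5, z6, z7, z8]
  ring
end

section
/- Under the same assumptions, for any ψ ∈ K the vector ψ'' := (½(1-Γ)(1-E_π) + ½(1+Γ)(1-E_φ))ψ lies in i·L', where L' is the symplectic complement of L = (1+Γ)L_φ + (1-Γ)L_π. -/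
open scoped InnerProductSpace

/-- For closed complex `Γ`-invariant subspaces `L_φ, L_π` of `K` with orthogonal
projections `E_φ, E_π`, and `L = (1+Γ)L_φ + (1-Γ)L_π`, the vector
`ψ'' = (½(1-Γ)(1-E_π) + ½(1+Γ)(1-E_φ))ψ` lies in `i·L'`, where `L'` is the
symplectic complement of `L`; equivalently `-i·ψ'' ∈ L'`. -/
theorem psi_doubleprime_mem_i_symplectic_complement
    {K : Type*} [NormedAddCommGroup K] [InnerProductSpace ℂ K] [CompleteSpace K]
    (Γ : K → K)
    (hΓinv : ∀ ψ, Γ (Γ ψ) = ψ)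
    (hΓadd : ∀ ψ₁ ψ₂, Γ (ψ₁ + ψ₂) = Γ ψ₁ + Γ ψ₂)
    (hΓsmul : ∀ (c : ℂ) ψ, Γ (c • ψ) = (starRingEnd ℂ c) • Γ ψ)
    (hΓinner : ∀ ψ₁ ψ₂, ⟪Γ ψ₁, Γ ψ₂⟫_ℂ = ⟪ψ₂, ψ₁⟫_ℂ)
    (Lφ Lπ : Submodule ℂ K) [Lφ.HasOrthogonalProjection] [Lπ.HasOrthogonalProjection]
    (hLφΓ : ∀ x ∈ Lφ, Γ x ∈ Lφ) (hLπΓ : ∀ x ∈ Lπ, Γ x ∈ Lπ)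
    (L : Set K)
    (hL : L = {x | ∃ f ∈ Lφ, ∃ g ∈ Lπ, x = (f + Γ f) + (g - Γ g)})
    (ψ ψ'' : K)
    (hψ'' : ψ'' = (2⁻¹ : ℝ) •
      (((ψ - (Lπ.orthogonalProjectionOnto ψ : K)) - Γ (ψ - (Lπ.orthogonalProjectionOnto ψ : K))) +
       ((ψ - (Lφ.orthogonalProjectionOnto ψ : K)) + Γ (ψ - (Lφ.orthogonalProjectionOnto ψ : K))))) :
    ∀ ξ ∈ L, ⟪(-Complex.I) • ψ'', ξ⟫_ℂ = ⟪ξ, (-Complex.I) • ψ''⟫_ℂ := by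
  intro ξ hξ
  rw [hL] at hξ
  obtain ⟨f, hf, g, hg, rfl⟩ := hξ
  set a := ψ - (Lπ.orthogonalProjectionOnto ψ : K) with ha
  set b := ψ - (Lφ.orthogonalProjectionOnto ψ : K) with hb
  -- orthogonality
  have hao : a ∈ Lπᗮ := Lπ.sub_starProjection_mem_orthogonal ψ
  have hbo : b ∈ Lφᗮ := Lφ.sub_starProjection_mem_orthogonal ψ
  have hag : ∀ y ∈ Lπ, ⟪y, a⟫_ℂ = 0 := fun y hy => hao y hy
  have hag' : ∀ y ∈ Lπ, ⟪a, y⟫_ℂ = 0 := fun y hy =>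
    (Submodule.mem_orthogonal' Lπ a).mp hao y hy
  have hbf : ∀ y ∈ Lφ, ⟪y, b⟫_ℂ = 0 := fun y hy => hbo y hy
  have hbf' : ∀ y ∈ Lφ, ⟪b, y⟫_ℂ = 0 := fun y hy =>
    (Submodule.mem_orthogonal' Lφ b).mp hbo y hy
  have herm : ∀ x y : K, ⟪Γ x, y⟫_ℂ = ⟪Γ y, x⟫_ℂ := by
    intro x y
    conv_lhs => rw [← hΓinv y, hΓinner]
  have herm' : ∀ x y : K, ⟪x, Γ y⟫_ℂ = ⟪y, Γ x⟫_ℂ := by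
    intro x y
    conv_lhs => rw [← hΓinv x, hΓinner]
  -- the key symmetric-part computation
  have key : ⟪ψ'', (f + Γ f) + (g - Γ g)⟫_ℂ + ⟪(f + Γ f) + (g - Γ g), ψ''⟫_ℂ = 0 := by
    have hsm : ψ'' = ((2⁻¹ : ℝ) : ℂ) • ((a - Γ a) + (b + Γ b)) := by
      rw [hψ'']; simp [← Complex.coe_smul]
    rw [hsm]
    have h1 : ⟪(a - Γ a), f + Γ f⟫_ℂ + ⟪f + Γ f, (a - Γ a)⟫_ℂ = 0 := by
      simp only [inner_add_left, inner_add_right, inner_sub_left, inner_sub_right, hΓinner]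
      linear_combination -herm a f - herm' f a
    have h2 : ⟪(b + Γ b), g - Γ g⟫_ℂ + ⟪g - Γ g, (b + Γ b)⟫_ℂ = 0 := by
      simp only [inner_add_left, inner_add_right, inner_sub_left, inner_sub_right, hΓinner]
      linear_combination herm b g - herm' g b - 2 * herm' b g
    have h3 : ⟪(a - Γ a), g - Γ g⟫_ℂ = 0 := by
      have h31 : ⟪Γ a, g⟫_ℂ = 0 := by rw [herm]; exact hag _ (hLπΓ g hg)
      have h32 : ⟪Γ a, Γ g⟫_ℂ = 0 := by rw [hΓinner]; exact hag _ hg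
      simp [inner_sub_left, inner_sub_right, hag' g hg, hag' _ (hLπΓ g hg), h31, h32]
    have h3' : ⟪g - Γ g, (a - Γ a)⟫_ℂ = 0 := by
      have h31 : ⟪g, Γ a⟫_ℂ = 0 := by rw [herm']; exact hag' _ (hLπΓ g hg)
      have h32 : ⟪Γ g, Γ a⟫_ℂ = 0 := by rw [hΓinner]; exact hag' _ hg
      simp [inner_sub_left, inner_sub_right, hag g hg, hag _ (hLπΓ g hg), h31, h32]
    have h4 : ⟪(b + Γ b), f + Γ f⟫_ℂ = 0 := by
      have h41 : ⟪Γ b, f⟫_ℂ = 0 := by rw [herm]; exact hbf _ (hLφΓ f hf)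
      have h42 : ⟪Γ b, Γ f⟫_ℂ = 0 := by rw [hΓinner]; exact hbf _ hf
      simp [inner_add_left, inner_add_right, hbf' f hf, hbf' _ (hLφΓ f hf), h41, h42]
    have h4' : ⟪f + Γ f, (b + Γ b)⟫_ℂ = 0 := by
      have h41 : ⟪f, Γ b⟫_ℂ = 0 := by rw [herm']; exact hbf' _ (hLφΓ f hf)
      have h42 : ⟪Γ f, Γ b⟫_ℂ = 0 := by rw [hΓinner]; exact hbf' _ hf
      simp [inner_add_left, inner_add_right, hbf f hf, hbf _ (hLφΓ f hf), h41, h42]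
    rw [inner_smul_left, inner_smul_right, Complex.conj_ofReal]
    have hexp1 : ⟪a - Γ a + (b + Γ b), f + Γ f + (g - Γ g)⟫_ℂ
        = ⟪a - Γ a, f + Γ f⟫_ℂ + ⟪a - Γ a, g - Γ g⟫_ℂ
          + ⟪b + Γ b, f + Γ f⟫_ℂ + ⟪b + Γ b, g - Γ g⟫_ℂ := by
      simp only [inner_add_left, inner_add_right]; ring
    have hexp2 : ⟪f + Γ f + (g - Γ g), a - Γ a + (b + Γ b)⟫_ℂ
        = ⟪f + Γ f, a - Γ a⟫_ℂ + ⟪g - Γ g, a - Γ a⟫_ℂ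
          + ⟪f + Γ f, b + Γ b⟫_ℂ + ⟪g - Γ g, b + Γ b⟫_ℂ := by
      simp only [inner_add_left, inner_add_right]; ring
    rw [hexp1, hexp2, h3, h3', h4, h4']
    linear_combination ((2⁻¹ : ℝ) : ℂ) * h1 + ((2⁻¹ : ℝ) : ℂ) * h2
  have hc : ⟪(f + Γ f) + (g - Γ g), ψ''⟫_ℂ = (starRingEnd ℂ) ⟪ψ'', (f + Γ f) + (g - Γ g)⟫_ℂ :=
    (inner_conj_symm _ _).symm
  simp only [inner_smul_left, inner_smul_right, map_neg, Complex.conj_I]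
  rw [hc] at key ⊢
  linear_combination (Complex.I) * key
end

section
/- The odd derivations δ^±_ψ on the polynomial field algebra P(L) satisfy the norm bounds ||δ⁺_ψ(A^±)|| ≤ (||(1-Γ)E_φψ||² + ||(1+Γ)E_πψ||²)^{1/2}·||A^±|| and ||δ⁻_ψ(A^±)|| ≤ (||(1+Γ)E_φψ||² + ||(1-Γ)E_πψ||²)^{1/2}·||A^±|| for all even/odd elements A^± and all ψ ∈ K. -/
open scoped InnerProductSpace

/-- Graded commutator matching: if two elements `G, G'` of a ring have the same
anticommutators with every element of a set `S`, then they have the same graded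
commutators with every product of elements of `S` (commutator for even length,
anticommutator for odd length). -/
lemma aux_parity_match {R : Type*} [Ring R] (G G' : R) (S : Set R)
    (h : ∀ s ∈ S, G * s + s * G = G' * s + s * G') :
    ∀ l : List R, (∀ x ∈ l, x ∈ S) →
      (Even l.length → G * l.prod - l.prod * G = G' * l.prod - l.prod * G') ∧
      (¬ Even l.length → G * l.prod + l.prod * G = G' * l.prod + l.prod * G') := by
  intro l
  induction l with
  | nil =>
    intro _
    refine ⟨fun _ => by simp, fun h' => absurd (by simp : Even ([] : List R).length) h'⟩
  | cons x t ih =>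
    intro hmem
    have hx : x ∈ S := hmem x List.mem_cons_self
    have ht := ih fun y hy => hmem y (List.mem_cons_of_mem x hy)
    constructor
    · intro he
      have hodd : ¬ Even t.length := by
        simp only [List.length_cons, Nat.even_add_one] at he
        exact he
      have h1 := ht.2 hodd
      have h2 := h x hx
      have e : ∀ g : R, g * (x * t.prod) - (x * t.prod) * g
          = (g * x + x * g) * t.prod - x * (g * t.prod + t.prod * g) := by
        intro g; noncomm_ring
      simp only [List.prod_cons]
      rw [e G, e G', h2, h1]
    · intro ho
      have heven : Even t.length := by
        simp only [List.length_cons, Nat.even_add_one, not_not] at ho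
        exact ho
      have h1 := ht.1 heven
      have h2 := h x hx
      have e : ∀ g : R, g * (x * t.prod) + (x * t.prod) * g
          = (g * x + x * g) * t.prod - x * (g * t.prod - t.prod * g) := by
        intro g; noncomm_ring
      simp only [List.prod_cons]
      rw [e G, e G', h2, h1]

set_option maxHeartbeats 1000000 in
/-- Norm bounds for the odd derivations `δ^±_ψ` on the polynomial field algebra
`P(L)`: on even elements `A⁺` (span of even field monomials with entries in
`L`), `δ^±_ψ(A⁺) = ½[G_±, A⁺]₋`, and on odd elements `A⁻`,
`δ^±_ψ(A⁻) = ½[G_±, A⁻]₊`, where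
`G_± = φ_aux((1∓Γ)ψ) + iπ_aux((1±Γ)ψ)`.  These satisfy
`‖δ⁺_ψ(A^±)‖ ≤ (‖(1-Γ)E_φψ‖² + ‖(1+Γ)E_πψ‖²)^{1/2}·‖A^±‖` and
`‖δ⁻_ψ(A^±)‖ ≤ (‖(1+Γ)E_φψ‖² + ‖(1-Γ)E_πψ‖²)^{1/2}·‖A^±‖`. -/
theorem derivations_norm_bounds
    {K H : Type*} [NormedAddCommGroup K] [InnerProductSpace ℂ K] [CompleteSpace K]
    [NormedAddCommGroup H] [InnerProductSpace ℂ H] [CompleteSpace H]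
    (a astar : K → H →L[ℂ] H)
    (hstar : ∀ ψ, astar ψ = ContinuousLinearMap.adjoint (a ψ))
    (hastar_lin : ∀ (c : ℂ) ψ₁ ψ₂, astar (c • ψ₁ + ψ₂) = c • astar ψ₁ + astar ψ₂)
    (hCAR1 : ∀ ψ₁ ψ₂, a ψ₁ * a ψ₂ + a ψ₂ * a ψ₁ = 0)
    (hCAR2 : ∀ ψ₁ ψ₂, a ψ₁ * astar ψ₂ + astar ψ₂ * a ψ₁ = ⟪ψ₁, ψ₂⟫_ℂ • 1)
    (Γ : K → K)
    (hΓinv : ∀ ψ, Γ (Γ ψ) = ψ)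
    (hΓadd : ∀ ψ₁ ψ₂, Γ (ψ₁ + ψ₂) = Γ ψ₁ + Γ ψ₂)
    (hΓsmul : ∀ (c : ℂ) ψ, Γ (c • ψ) = (starRingEnd ℂ c) • Γ ψ)
    (hΓinner : ∀ ψ₁ ψ₂, ⟪Γ ψ₁, Γ ψ₂⟫_ℂ = ⟪ψ₂, ψ₁⟫_ℂ)
    (φaux πaux fld : K → H →L[ℂ] H)
    (hφaux : ∀ η, φaux η = astar η + a (Γ η))
    (hπaux : ∀ η, πaux η = Complex.I • (astar η - a (Γ η)))
    (hfld : ∀ ξ, fld ξ = astar ξ + a ξ)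
    (Lφ Lπ : Submodule ℂ K) [Submodule.HasOrthogonalProjection Lφ] [Submodule.HasOrthogonalProjection Lπ]
    (hLφΓ : ∀ x ∈ Lφ, Γ x ∈ Lφ) (hLπΓ : ∀ x ∈ Lπ, Γ x ∈ Lπ)
    (L : Set K)
    (hL : L = {x | ∃ f ∈ Lφ, ∃ g ∈ Lπ, x = (f + Γ f) + (g - Γ g)})
    (ψ : K) (Gp Gm : H →L[ℂ] H)
    (hGp : Gp = φaux (ψ - Γ ψ) + Complex.I • πaux (ψ + Γ ψ))
    (hGm : Gm = φaux (ψ + Γ ψ) + Complex.I • πaux (ψ - Γ ψ))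
    (Cp Cm : ℝ)
    (hCp : Cp = Real.sqrt
      (‖(Submodule.orthogonalProjectionOnto Lφ ψ : K) - Γ (Submodule.orthogonalProjectionOnto Lφ ψ : K)‖ ^ 2 +
       ‖(Submodule.orthogonalProjectionOnto Lπ ψ : K) + Γ (Submodule.orthogonalProjectionOnto Lπ ψ : K)‖ ^ 2))
    (hCm : Cm = Real.sqrt
      (‖(Submodule.orthogonalProjectionOnto Lφ ψ : K) + Γ (Submodule.orthogonalProjectionOnto Lφ ψ : K)‖ ^ 2 +
       ‖(Submodule.orthogonalProjectionOnto Lπ ψ : K) - Γ (Submodule.orthogonalProjectionOnto Lπ ψ : K)‖ ^ 2)) :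
    (∀ A ∈ Submodule.span ℂ
        {M : H →L[ℂ] H | ∃ l : List K, (∀ ξ ∈ l, ξ ∈ L) ∧ Even l.length ∧
          M = (l.map fld).prod},
      ‖(2⁻¹ : ℂ) • (Gp * A - A * Gp)‖ ≤ Cp * ‖A‖ ∧
      ‖(2⁻¹ : ℂ) • (Gm * A - A * Gm)‖ ≤ Cm * ‖A‖) ∧
    (∀ A ∈ Submodule.span ℂ
        {M : H →L[ℂ] H | ∃ l : List K, (∀ ξ ∈ l, ξ ∈ L) ∧ ¬ Even l.length ∧
          M = (l.map fld).prod},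
      ‖(2⁻¹ : ℂ) • (Gp * A + A * Gp)‖ ≤ Cp * ‖A‖ ∧
      ‖(2⁻¹ : ℂ) • (Gm * A + A * Gm)‖ ≤ Cm * ‖A‖) := by
  -- Basic linearity facts for `astar` and `a`.
  have hastar_zero : astar 0 = 0 := by
    have h := hastar_lin 1 0 0
    simp only [one_smul, add_zero] at h
    exact (add_eq_left.mp h.symm)
  have hastar_add : ∀ x y, astar (x + y) = astar x + astar y := by
    intro x y
    simpa using hastar_lin 1 x y
  have hastar_smul : ∀ (c : ℂ) x, astar (c • x) = c • astar x := by
    intro c x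
    simpa [hastar_zero] using hastar_lin c x 0
  have hastar_neg : ∀ x, astar (-x) = -astar x := by
    intro x
    simpa using hastar_smul (-1) x
  have hastar_sub : ∀ x y, astar (x - y) = astar x - astar y := by
    intro x y
    rw [sub_eq_add_neg, hastar_add, hastar_neg, sub_eq_add_neg]
  have ha_adj : ∀ x, a x = ContinuousLinearMap.adjoint (astar x) := by
    intro x
    rw [hstar, ContinuousLinearMap.adjoint_adjoint]
  have ha_add : ∀ x y, a (x + y) = a x + a y := by
    intro x y
    rw [ha_adj, hastar_add, map_add, ← ha_adj, ← ha_adj]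
  have ha_neg : ∀ x, a (-x) = -a x := by
    intro x
    rw [ha_adj, hastar_neg, map_neg, ← ha_adj]
  have ha_sub : ∀ x y, a (x - y) = a x - a y := by
    intro x y
    rw [sub_eq_add_neg, ha_add, ha_neg, sub_eq_add_neg]
  -- Γ facts
  have hΓneg : ∀ x, Γ (-x) = -Γ x := by
    intro x
    have := hΓsmul (-1) x
    simpa using this
  have hΓsub : ∀ x y, Γ (x - y) = Γ x - Γ y := by
    intro x y
    rw [sub_eq_add_neg, hΓadd, hΓneg, sub_eq_add_neg]
  -- Normal forms for Gp and Gm.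
  have hGp' : Gp = (2 : ℂ) • (a (Γ ψ) - astar (Γ ψ)) := by
    rw [hGp, hφaux, hπaux, hΓsub, hΓadd, hΓinv, hastar_sub, hastar_add,
      ha_sub, ha_add, smul_smul, Complex.I_mul_I, neg_one_smul, two_smul]
    abel
  have hGm' : Gm = (2 : ℂ) • (a (Γ ψ) + astar (Γ ψ)) := by
    rw [hGm, hφaux, hπaux, hΓsub, hΓadd, hΓinv, hastar_sub, hastar_add,
      ha_sub, ha_add, smul_smul, Complex.I_mul_I, neg_one_smul, two_smul]
    abel
  -- CAR for creation operators.
  have hCAR1s : ∀ x y, astar x * astar y + astar y * astar x = 0 := by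
    intro x y
    have h := congrArg ContinuousLinearMap.adjoint (hCAR1 x y)
    rw [map_add, map_zero] at h
    rw [ContinuousLinearMap.mul_def, ContinuousLinearMap.mul_def,
      ContinuousLinearMap.adjoint_comp, ContinuousLinearMap.adjoint_comp,
      ← hstar, ← hstar] at h
    rw [← ContinuousLinearMap.mul_def, ← ContinuousLinearMap.mul_def] at h
    rw [add_comm]
    exact h
  -- Anticommutators of `a w ∓ astar w` with field operators.
  have hacP : ∀ w ξ, (a w - astar w) * fld ξ + fld ξ * (a w - astar w)
      = (⟪w, ξ⟫_ℂ - ⟪ξ, w⟫_ℂ) • 1 := by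
    intro w ξ
    rw [hfld]
    have e : (a w - astar w) * (astar ξ + a ξ) + (astar ξ + a ξ) * (a w - astar w)
        = ((a w * astar ξ + astar ξ * a w) + (a w * a ξ + a ξ * a w))
          - ((astar w * astar ξ + astar ξ * astar w) + (a ξ * astar w + astar w * a ξ)) := by
      noncomm_ring
    rw [e, hCAR2 w ξ, hCAR1 w ξ, hCAR1s w ξ, hCAR2 ξ w]
    simp [sub_smul]
  have hacM : ∀ w ξ, (a w + astar w) * fld ξ + fld ξ * (a w + astar w)
      = (⟪w, ξ⟫_ℂ + ⟪ξ, w⟫_ℂ) • 1 := by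
    intro w ξ
    rw [hfld]
    have e : (a w + astar w) * (astar ξ + a ξ) + (astar ξ + a ξ) * (a w + astar w)
        = ((a w * astar ξ + astar ξ * a w) + (a w * a ξ + a ξ * a w))
          + ((astar w * astar ξ + astar ξ * astar w) + (a ξ * astar w + astar w * a ξ)) := by
      noncomm_ring
    rw [e, hCAR2 w ξ, hCAR1 w ξ, hCAR1s w ξ, hCAR2 ξ w]
    simp [add_smul]
  -- Norm bounds ‖a w ∓ astar w‖ ≤ ‖w‖.
  have htwo : ∀ X : H →L[ℂ] H, X + X = 0 → X = 0 := by
    intro X hX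
    have h : ((2 : ℂ)⁻¹ * 2) • X = (0 : H →L[ℂ] H) := by
      rw [mul_smul, two_smul, hX, smul_zero]
    rw [inv_mul_cancel₀ (two_ne_zero (α := ℂ)), one_smul] at h
    exact h
  have hsq : ∀ w, a w * a w = 0 := fun w => htwo _ (hCAR1 w w)
  have hsqs : ∀ w, astar w * astar w = 0 := fun w => htwo _ (hCAR1s w w)
  have hnorm1 : ∀ (X : H →L[ℂ] H) (w : K),
      ContinuousLinearMap.adjoint X ∘L X = (⟪w, w⟫_ℂ) • 1 → ‖X‖ ≤ ‖w‖ := by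
    intro X w hXX
    have h1 : ‖X‖ * ‖X‖ ≤ ‖w‖ * ‖w‖ := by
      rw [← ContinuousLinearMap.norm_adjoint_comp_self X, hXX, norm_smul]
      have h2 : ‖⟪w, w⟫_ℂ‖ = ‖w‖ * ‖w‖ := by
        rw [inner_self_eq_norm_sq_to_K]
        simp [pow_two, abs_of_nonneg]
      rw [h2]
      calc ‖w‖ * ‖w‖ * ‖(1 : H →L[ℂ] H)‖ ≤ ‖w‖ * ‖w‖ * 1 := by
            apply mul_le_mul_of_nonneg_left ContinuousLinearMap.norm_id_le
            positivity
        _ = ‖w‖ * ‖w‖ := mul_one _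
    exact nonneg_le_nonneg_of_sq_le_sq (norm_nonneg _) h1
  have hnormP : ∀ w, ‖a w - astar w‖ ≤ ‖w‖ := by
    intro w
    apply hnorm1 _ w
    have hadj : ContinuousLinearMap.adjoint (a w - astar w) = astar w - a w := by
      rw [map_sub, ← hstar, ← ha_adj]
    rw [hadj, ← ContinuousLinearMap.mul_def]
    have e : (astar w - a w) * (a w - astar w)
        = (a w * astar w + astar w * a w) - a w * a w - astar w * astar w := by
      noncomm_ring
    rw [e, hCAR2 w w, hsq w, hsqs w]
    simp
  have hnormM : ∀ w, ‖a w + astar w‖ ≤ ‖w‖ := by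
    intro w
    apply hnorm1 _ w
    have hadj : ContinuousLinearMap.adjoint (a w + astar w) = astar w + a w := by
      rw [map_add, ← hstar, ← ha_adj, add_comm]
    rw [hadj, ← ContinuousLinearMap.mul_def]
    have e : (astar w + a w) * (a w + astar w)
        = (a w * astar w + astar w * a w) + a w * a w + astar w * astar w := by
      noncomm_ring
    rw [e, hCAR2 w w, hsq w, hsqs w]
    simp
  -- Projection facts.
  set q : K := (Submodule.orthogonalProjectionOnto Lφ ψ : K) with hq_def
  set p : K := (Submodule.orthogonalProjectionOnto Lπ ψ : K) with hp_def
  have hψq : ψ - q ∈ Lφᗮ := Submodule.sub_starProjection_mem_orthogonal (K := Lφ) ψ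
  have hψp : ψ - p ∈ Lπᗮ := Submodule.sub_starProjection_mem_orthogonal (K := Lπ) ψ
  have hq2 : ∀ f ∈ Lφ, ⟪ψ, f⟫_ℂ = ⟪q, f⟫_ℂ := by
    intro f hf
    have h : ⟪f, ψ - q⟫_ℂ = 0 := hψq f hf
    have h2 : ⟪ψ - q, f⟫_ℂ = 0 := by
      rw [← inner_conj_symm, h, map_zero]
    rw [inner_sub_left] at h2
    linear_combination h2
  have hp2 : ∀ g ∈ Lπ, ⟪ψ, g⟫_ℂ = ⟪p, g⟫_ℂ := by
    intro g hg
    have h : ⟪g, ψ - p⟫_ℂ = 0 := hψp g hg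
    have h2 : ⟪ψ - p, g⟫_ℂ = 0 := by
      rw [← inner_conj_symm, h, map_zero]
    rw [inner_sub_left] at h2
    linear_combination h2
  have hq1 : ∀ f ∈ Lφ, ⟪Γ ψ, f⟫_ℂ = ⟪Γ q, f⟫_ℂ := by
    intro f hf
    have h : ⟪Γ f, ψ - q⟫_ℂ = 0 := hψq (Γ f) (hLφΓ f hf)
    have h2 : ⟪Γ ψ - Γ q, f⟫_ℂ = 0 := by
      rw [← hΓsub]
      calc ⟪Γ (ψ - q), f⟫_ℂ = ⟪Γ (ψ - q), Γ (Γ f)⟫_ℂ := by rw [hΓinv]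
        _ = ⟪Γ f, ψ - q⟫_ℂ := hΓinner _ _
        _ = 0 := h
    rw [inner_sub_left] at h2
    linear_combination h2
  have hp1 : ∀ g ∈ Lπ, ⟪Γ ψ, g⟫_ℂ = ⟪Γ p, g⟫_ℂ := by
    intro g hg
    have h : ⟪Γ g, ψ - p⟫_ℂ = 0 := hψp (Γ g) (hLπΓ g hg)
    have h2 : ⟪Γ ψ - Γ p, g⟫_ℂ = 0 := by
      rw [← hΓsub]
      calc ⟪Γ (ψ - p), g⟫_ℂ = ⟪Γ (ψ - p), Γ (Γ g)⟫_ℂ := by rw [hΓinv]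
        _ = ⟪Γ g, ψ - p⟫_ℂ := hΓinner _ _
        _ = 0 := h
    rw [inner_sub_left] at h2
    linear_combination h2
  -- Conjugation helpers.
  have hsw : ∀ x y : K, ⟪x, Γ y⟫_ℂ = (starRingEnd ℂ) ⟪Γ x, y⟫_ℂ := by
    intro x y
    calc ⟪x, Γ y⟫_ℂ = ⟪Γ (Γ x), Γ y⟫_ℂ := by rw [hΓinv]
      _ = ⟪y, Γ x⟫_ℂ := hΓinner _ _
      _ = (starRingEnd ℂ) ⟪Γ x, y⟫_ℂ := (inner_conj_symm _ _).symm
  have hrev : ∀ x y : K, ⟪x, y⟫_ℂ = (starRingEnd ℂ) ⟪y, x⟫_ℂ := by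
    intro x y
    exact (inner_conj_symm x y).symm
  -- The auxiliary vectors.
  set wp : K := (Γ q - q) + (p + Γ p) with hwp_def
  set wm : K := (Γ q + q) + (Γ p - p) with hwm_def
  set Xp : H →L[ℂ] H := a wp - astar wp with hXp_def
  set Xm : H →L[ℂ] H := a wm + astar wm with hXm_def
  -- Norm identities.
  have hΓwpx : Γ (Γ q - q) = -(Γ q - q) := by
    rw [hΓsub, hΓinv]; abel
  have hΓwpy : Γ (p + Γ p) = p + Γ p := by
    rw [hΓadd, hΓinv]; abel
  have hΓwmx : Γ (Γ q + q) = Γ q + q := by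
    rw [hΓadd, hΓinv]; abel
  have hΓwmy : Γ (Γ p - p) = -(Γ p - p) := by
    rw [hΓsub, hΓinv]; abel
  have hortho : ∀ x y : K, Γ x = -x → Γ y = y → RCLike.re ⟪x, y⟫_ℂ = 0 := by
    intro x y hx hy
    have h : ⟪x, y⟫_ℂ = -(starRingEnd ℂ) ⟪x, y⟫_ℂ := by
      calc ⟪x, y⟫_ℂ = ⟪Γ y, Γ x⟫_ℂ := (hΓinner y x).symm
        _ = ⟪y, -x⟫_ℂ := by rw [hx, hy]
        _ = -⟪y, x⟫_ℂ := by rw [inner_neg_right]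
        _ = -(starRingEnd ℂ) ⟪x, y⟫_ℂ := by rw [inner_conj_symm]
    have := congrArg Complex.re h
    simp only [Complex.neg_re, Complex.conj_re] at this
    have : Complex.re ⟪x, y⟫_ℂ = 0 := by linarith
    simpa using this
  have hortho' : ∀ x y : K, Γ x = -x → Γ y = y → RCLike.re ⟪y, x⟫_ℂ = 0 := by
    intro x y hx hy
    have h := hortho x y hx hy
    rw [hrev y x, RCLike.conj_re]
    exact h
  have hwpnorm : ‖wp‖ = Cp := by
    have hre : RCLike.re ⟪(Γ q - q : K), (p + Γ p : K)⟫_ℂ = 0 := hortho _ _ hΓwpx hΓwpy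
    have hsq : ‖wp‖ ^ 2 = ‖q - Γ q‖ ^ 2 + ‖p + Γ p‖ ^ 2 := by
      rw [hwp_def, norm_add_sq (𝕜 := ℂ), hre, norm_sub_rev]
      ring
    rw [hCp, ← hsq, Real.sqrt_sq (norm_nonneg _)]
  have hwmnorm : ‖wm‖ = Cm := by
    have hre : RCLike.re ⟪(Γ q + q : K), (Γ p - p : K)⟫_ℂ = 0 := hortho' _ _ hΓwmy hΓwmx
    have hsq : ‖wm‖ ^ 2 = ‖q + Γ q‖ ^ 2 + ‖p - Γ p‖ ^ 2 := by
      rw [hwm_def, norm_add_sq (𝕜 := ℂ), hre, norm_sub_rev, add_comm (Γ q) q]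
      ring
    rw [hCm, ← hsq, Real.sqrt_sq (norm_nonneg _)]
  -- Matching of anticommutators with field operators.
  have hmatchP : ∀ ξ ∈ L, Gp * fld ξ + fld ξ * Gp = Xp * fld ξ + fld ξ * Xp := by
    intro ξ hξ
    rw [hL] at hξ
    obtain ⟨f, hf, g, hg, rfl⟩ := hξ
    rw [hGp', smul_mul_assoc, mul_smul_comm, ← smul_add, hacP (Γ ψ) _, hXp_def,
      hacP wp _, smul_smul]
    congr 1
    rw [hwp_def]
    have hf1 : ∀ x : K, ⟪f, x⟫_ℂ = (starRingEnd ℂ) ⟪x, f⟫_ℂ := fun x => hrev f x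
    have hg1 : ∀ x : K, ⟪g, x⟫_ℂ = (starRingEnd ℂ) ⟪x, g⟫_ℂ := fun x => hrev g x
    have hfΓ : ∀ x : K, ⟪Γ f, x⟫_ℂ = (starRingEnd ℂ) ⟪x, Γ f⟫_ℂ := fun x => hrev (Γ f) x
    have hgΓ : ∀ x : K, ⟪Γ g, x⟫_ℂ = (starRingEnd ℂ) ⟪x, Γ g⟫_ℂ := fun x => hrev (Γ g) x
    simp only [inner_add_left, inner_add_right, inner_sub_left, inner_sub_right]
    simp only [hf1, hg1, hfΓ, hgΓ, hsw, hΓinv, map_add, map_sub, Complex.conj_conj,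
      hq2 f hf, hp2 g hg, hq1 f hf, hp1 g hg]
    ring
  have hmatchM : ∀ ξ ∈ L, Gm * fld ξ + fld ξ * Gm = Xm * fld ξ + fld ξ * Xm := by
    intro ξ hξ
    rw [hL] at hξ
    obtain ⟨f, hf, g, hg, rfl⟩ := hξ
    rw [hGm', smul_mul_assoc, mul_smul_comm, ← smul_add, hacM (Γ ψ) _, hXm_def,
      hacM wm _, smul_smul]
    congr 1
    rw [hwm_def]
    have hf1 : ∀ x : K, ⟪f, x⟫_ℂ = (starRingEnd ℂ) ⟪x, f⟫_ℂ := fun x => hrev f x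
    have hg1 : ∀ x : K, ⟪g, x⟫_ℂ = (starRingEnd ℂ) ⟪x, g⟫_ℂ := fun x => hrev g x
    have hfΓ : ∀ x : K, ⟪Γ f, x⟫_ℂ = (starRingEnd ℂ) ⟪x, Γ f⟫_ℂ := fun x => hrev (Γ f) x
    have hgΓ : ∀ x : K, ⟪Γ g, x⟫_ℂ = (starRingEnd ℂ) ⟪x, Γ g⟫_ℂ := fun x => hrev (Γ g) x
    simp only [inner_add_left, inner_add_right, inner_sub_left, inner_sub_right]
    simp only [hf1, hg1, hfΓ, hgΓ, hsw, hΓinv, map_add, map_sub, Complex.conj_conj,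
      hq2 f hf, hp2 g hg, hq1 f hf, hp1 g hg]
    ring
  -- Extension from monomials to the span.
  have hspan : ∀ (G G' : H →L[ℂ] H),
      (∀ ξ ∈ L, G * fld ξ + fld ξ * G = G' * fld ξ + fld ξ * G') →
      (∀ A ∈ Submodule.span ℂ
          {M : H →L[ℂ] H | ∃ l : List K, (∀ ξ ∈ l, ξ ∈ L) ∧ Even l.length ∧
            M = (l.map fld).prod},
        G * A - A * G = G' * A - A * G') ∧
      (∀ A ∈ Submodule.span ℂ
          {M : H →L[ℂ] H | ∃ l : List K, (∀ ξ ∈ l, ξ ∈ L) ∧ ¬ Even l.length ∧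
            M = (l.map fld).prod},
        G * A + A * G = G' * A + A * G') := by
    intro G G' hGG'
    have base := aux_parity_match G G' (fld '' L) (by
      rintro s ⟨ξ, hξ, rfl⟩
      exact hGG' ξ hξ)
    constructor
    · intro A hA
      induction hA using Submodule.span_induction with
      | mem M hM =>
        obtain ⟨l, hl, hev, rfl⟩ := hM
        have hmem : ∀ x ∈ l.map fld, x ∈ fld '' L := by
          intro x hx
          obtain ⟨ξ, hξ, rfl⟩ := List.mem_map.mp hx
          exact ⟨ξ, hl ξ hξ, rfl⟩
        have hlen : Even (l.map fld).length := by
          rwa [List.length_map]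
        exact (base (l.map fld) hmem).1 hlen
      | zero => simp
      | add x y _ _ hx hy =>
        have e : ∀ g : H →L[ℂ] H, g * (x + y) - (x + y) * g
            = (g * x - x * g) + (g * y - y * g) := by intro g; noncomm_ring
        rw [e G, e G', hx, hy]
      | smul c x _ hx =>
        rw [mul_smul_comm, smul_mul_assoc, ← smul_sub, hx,
          mul_smul_comm, smul_mul_assoc, ← smul_sub]
    · intro A hA
      induction hA using Submodule.span_induction with
      | mem M hM =>
        obtain ⟨l, hl, hev, rfl⟩ := hM
        have hmem : ∀ x ∈ l.map fld, x ∈ fld '' L := by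
          intro x hx
          obtain ⟨ξ, hξ, rfl⟩ := List.mem_map.mp hx
          exact ⟨ξ, hl ξ hξ, rfl⟩
        have hlen : ¬ Even (l.map fld).length := by
          rwa [List.length_map]
        exact (base (l.map fld) hmem).2 hlen
      | zero => simp
      | add x y _ _ hx hy =>
        have e : ∀ g : H →L[ℂ] H, g * (x + y) + (x + y) * g
            = (g * x + x * g) + (g * y + y * g) := by intro g; noncomm_ring
        rw [e G, e G', hx, hy]
      | smul c x _ hx =>
        rw [mul_smul_comm, smul_mul_assoc, ← smul_add, hx,
          mul_smul_comm, smul_mul_assoc, ← smul_add]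
  -- Final norm estimates.
  have hbound : ∀ (X : H →L[ℂ] H) (C : ℝ) (A : H →L[ℂ] H), ‖X‖ ≤ C →
      ‖(2⁻¹ : ℂ) • (X * A - A * X)‖ ≤ C * ‖A‖ ∧
      ‖(2⁻¹ : ℂ) • (X * A + A * X)‖ ≤ C * ‖A‖ := by
    intro X C A hX
    have hC : 0 ≤ C := le_trans (norm_nonneg _) hX
    have hhalf : ‖(2⁻¹ : ℂ)‖ = 2⁻¹ := by
      simp
    have h1 : ‖X * A‖ ≤ C * ‖A‖ :=
      le_trans (ContinuousLinearMap.opNorm_comp_le X A)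
        (mul_le_mul_of_nonneg_right hX (norm_nonneg _))
    have h2 : ‖A * X‖ ≤ C * ‖A‖ := by
      refine le_trans (ContinuousLinearMap.opNorm_comp_le A X) ?_
      rw [mul_comm]
      exact mul_le_mul_of_nonneg_right hX (norm_nonneg _)
    constructor
    · rw [norm_smul, hhalf]
      have : ‖X * A - A * X‖ ≤ C * ‖A‖ + C * ‖A‖ :=
        le_trans (norm_sub_le _ _) (add_le_add h1 h2)
      linarith
    · rw [norm_smul, hhalf]
      have : ‖X * A + A * X‖ ≤ C * ‖A‖ + C * ‖A‖ :=
        le_trans (norm_add_le _ _) (add_le_add h1 h2)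
      linarith
  have hXpC : ‖Xp‖ ≤ Cp := by
    rw [hXp_def, ← hwpnorm]; exact hnormP wp
  have hXmC : ‖Xm‖ ≤ Cm := by
    rw [hXm_def, ← hwmnorm]; exact hnormM wm
  have hspanP := hspan Gp Xp hmatchP
  have hspanM := hspan Gm Xm hmatchM
  constructor
  · intro A hA
    constructor
    · rw [hspanP.1 A hA]
      exact (hbound Xp Cp A hXpC).1
    · rw [hspanM.1 A hA]
      exact (hbound Xm Cm A hXmC).1
  · intro A hA
    constructor
    · rw [hspanP.2 A hA]
      exact (hbound Xp Cp A hXpC).2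
    · rw [hspanM.2 A hA]
      exact (hbound Xm Cm A hXmC).2
end
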